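/- With g₀(ζ) := ∫_ζ^1 √(t^{−2} − 1) dt − (1−ζ²)^{3/2}/(2−ζ²): g₀(ζ) → +∞ as ζ → 0⁺, g₀(√(2−√2)) < 0, and consequently there exists a unique ζ₀ ∈ (0, √(2−√2)) with g₀(ζ₀) = 0; moreover g₀(ζ) < 0 for all ζ ∈ (ζ₀, 1). -/

import Mathlib

open Filter

/-- The leading-order criticality function
`g₀(ζ) = ∫_ζ^1 √(t^{−2}−1) dt − (1−ζ²)^{3/2}/(2−ζ²)`. -/
noncomputable def g0 (ζ : ℝ) : ℝ :=
  (∫ t in ζ..(1 : ℝ), Real.sqrt (1 / t ^ 2 - 1)) - (1 - ζ ^ 2) ^ ((3 : ℝ) / 2) / (2 - ζ ^ 2)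

namespace Stmt9Aux

open intervalIntegral

noncomputable def f (t : ℝ) : ℝ := Real.sqrt (1 / t ^ 2 - 1)

lemma f_contOn : ContinuousOn f {t : ℝ | t ≠ 0} := by
  apply Real.continuous_sqrt.comp_continuousOn
  exact (continuousOn_const.div (continuousOn_pow 2) (fun t ht => pow_ne_zero 2 ht)).sub
    continuousOn_const

lemma f_intOn {a b : ℝ} (ha : 0 < a) (hb : 0 < b) :
    IntervalIntegrable f MeasureTheory.volume a b := by
  apply (f_contOn.mono _).intervalIntegrable
  intro t ht
  rcases Set.mem_uIcc.1 ht with h | h <;> simp only [Set.mem_setOf_eq] <;> nlinarith [h.1, h.2]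

lemma hasDerivAt_int {ζ : ℝ} (hζ : 0 < ζ) :
    HasDerivAt (fun u => ∫ t in u..(1:ℝ), f t) (-f ζ) ζ := by
  have h1 : HasDerivAt (fun u => ∫ t in (1:ℝ)..u, f t) (f ζ) ζ := by
    apply integral_hasDerivAt_right (f_intOn one_pos hζ)
    · exact (f_contOn.stronglyMeasurableAtFilter isOpen_ne ζ hζ.ne')
    · exact f_contOn.continuousAt (isOpen_ne.mem_nhds hζ.ne')
  have := h1.neg
  simpa [intervalIntegral.integral_symm (1:ℝ), Pi.neg_def] using this

lemma rpow_threehalf {x : ℝ} (hx : 0 ≤ x) : x ^ ((3:ℝ)/2) = x * Real.sqrt x := by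
  rw [Real.sqrt_eq_rpow, show (3:ℝ)/2 = 1 + 1/2 by norm_num, Real.rpow_add' hx (by norm_num),
    Real.rpow_one]

lemma f_eq {ζ : ℝ} (h0 : 0 < ζ) : f ζ = Real.sqrt (1 - ζ^2) / ζ := by
  rw [f, show 1/ζ^2 - 1 = (1-ζ^2)/ζ^2 by field_simp, Real.sqrt_div' _ (by positivity),
    Real.sqrt_sq h0.le]

noncomputable def D (ζ : ℝ) : ℝ :=
  -Real.sqrt (1-ζ^2)/ζ + ζ * Real.sqrt (1-ζ^2) * (4-ζ^2)/(2-ζ^2)^2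

lemma hasDerivAt_g0 {ζ : ℝ} (h0 : 0 < ζ) (h1 : ζ ≤ 1) :
    HasDerivAt g0 (D ζ) ζ := by
  have hb : HasDerivAt (fun ζ : ℝ => 1 - ζ^2) (-(2*ζ)) ζ := by
    simpa using ((hasDerivAt_pow 2 ζ).const_sub 1)
  have hnum : HasDerivAt (fun ζ : ℝ => (1 - ζ^2) ^ ((3:ℝ)/2))
      (-(2*ζ) * ((3:ℝ)/2) * (1 - ζ^2) ^ ((3:ℝ)/2 - 1)) ζ :=
    hb.rpow_const (Or.inr (by norm_num))
  have hden : HasDerivAt (fun ζ : ℝ => 2 - ζ^2) (-(2*ζ)) ζ := by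
    simpa using ((hasDerivAt_pow 2 ζ).const_sub 2)
  have hd2 : (2 - ζ^2) ≠ 0 := by nlinarith
  have hq := hnum.div hden hd2
  have hI := hasDerivAt_int h0
  have := hI.sub hq
  refine HasDerivAt.congr_deriv this (Eq.symm ?_)
  have hx : (0:ℝ) ≤ 1 - ζ^2 := by nlinarith
  rw [D, f_eq h0, rpow_threehalf hx, show (3:ℝ)/2 - 1 = 1/2 by norm_num,
    ← Real.sqrt_eq_rpow]
  have hs := Real.sq_sqrt hx
  set s := Real.sqrt (1 - ζ^2)
  rw [show (1:ℝ) - ζ^2 = s^2 from hs.symm]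
  field_simp
  linear_combination (2*s*ζ^2) * hs

/-- `A := √(2 − √2)` basic facts. -/
noncomputable def A : ℝ := Real.sqrt (2 - Real.sqrt 2)

lemma sqrt2_bounds : (1.414:ℝ) < Real.sqrt 2 ∧ Real.sqrt 2 < 1.4143 := by
  constructor
  · have : (1.414:ℝ) = Real.sqrt (1.414^2) := by
      rw [Real.sqrt_sq]; norm_num
    rw [this]
    apply Real.sqrt_lt_sqrt (by positivity)
    norm_num
  · have : (1.4143:ℝ) = Real.sqrt (1.4143^2) := by
      rw [Real.sqrt_sq]; norm_num
    rw [this]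
    apply Real.sqrt_lt_sqrt (by norm_num)
    norm_num

lemma A_sq : A^2 = 2 - Real.sqrt 2 := by
  rw [A, Real.sq_sqrt]; nlinarith [sqrt2_bounds.2]

lemma A_pos : 0 < A := Real.sqrt_pos.2 (by nlinarith [sqrt2_bounds.2])

lemma A_lt_one : A < 1 := by
  nlinarith [A_sq, A_pos, sqrt2_bounds.1]

lemma A_gt : (0.76:ℝ) < A := by
  nlinarith [A_sq, A_pos, sqrt2_bounds.2]

lemma D_neg {ζ : ℝ} (h0 : 0 < ζ) (hA : ζ < A) : D ζ < 0 := by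
  have h1 : ζ < 1 := hA.trans A_lt_one
  have hx : (0:ℝ) < 1 - ζ^2 := by nlinarith
  have hs : 0 < Real.sqrt (1 - ζ^2) := Real.sqrt_pos.2 hx
  have hζ2 : ζ^2 < 2 - Real.sqrt 2 := by
    have := A_sq
    nlinarith [A_pos]
  have hkey : ζ^2*(4-ζ^2) < (2-ζ^2)^2 := by
    nlinarith [Real.sq_sqrt (by norm_num : (2:ℝ) ≥ 0).le, sqrt2_bounds.1]
  have hd : (2 - ζ^2) ≠ 0 := by nlinarith
  have hEq : D ζ = (Real.sqrt (1-ζ^2)/(ζ*(2-ζ^2)^2)) * (ζ^2*(4-ζ^2) - (2-ζ^2)^2) := by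
    rw [D]; field_simp; ring
  rw [hEq]
  apply mul_neg_of_pos_of_neg
  · exact div_pos hs (mul_pos h0 (by positivity))
  · linarith

lemma D_pos {ζ : ℝ} (hA : A < ζ) (h1 : ζ < 1) : 0 < D ζ := by
  have h0 : 0 < ζ := A_pos.trans hA
  have hx : (0:ℝ) < 1 - ζ^2 := by nlinarith
  have hζ2 : 2 - Real.sqrt 2 < ζ^2 := by nlinarith [A_sq, A_pos]
  have hkey : (2-ζ^2)^2 < ζ^2*(4-ζ^2) := by
    nlinarith [Real.sq_sqrt (by norm_num : (0:ℝ) ≤ 2), sqrt2_bounds.1, sq_nonneg ζ]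
  have hd : (2 - ζ^2) ≠ 0 := by nlinarith
  have hEq : D ζ = (Real.sqrt (1-ζ^2)/(ζ*(2-ζ^2)^2)) * (ζ^2*(4-ζ^2) - (2-ζ^2)^2) := by
    rw [D]; field_simp; ring
  rw [hEq]
  apply mul_pos
  · have hs : 0 < Real.sqrt (1 - ζ^2) := Real.sqrt_pos.2 hx
    exact div_pos hs (mul_pos h0 (by positivity))
  · linarith

lemma contOn_g0 : ContinuousOn g0 (Set.Ioc 0 1) := fun ζ hζ =>
  (hasDerivAt_g0 hζ.1 hζ.2).continuousAt.continuousWithinAt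

lemma g0_one : g0 1 = 0 := by
  simp [g0, Real.zero_rpow (by norm_num : ((3:ℝ)/2) ≠ 0)]

lemma strictAntiOn_g0 : StrictAntiOn g0 (Set.Ioc 0 A) := by
  apply strictAntiOn_of_deriv_neg (convex_Ioc 0 A)
    (contOn_g0.mono (fun x hx => ⟨hx.1, hx.2.trans A_lt_one.le⟩))
  intro x hx
  rw [interior_Ioc] at hx
  rw [(hasDerivAt_g0 hx.1 (hx.2.trans A_lt_one).le).deriv]
  exact D_neg hx.1 hx.2

lemma strictMonoOn_g0 : StrictMonoOn g0 (Set.Icc A 1) := by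
  apply strictMonoOn_of_deriv_pos (convex_Icc A 1)
    (contOn_g0.mono (fun x hx => ⟨A_pos.trans_le hx.1, hx.2⟩))
  intro x hx
  rw [interior_Icc] at hx
  rw [(hasDerivAt_g0 (A_pos.trans hx.1) hx.2.le).deriv]
  exact D_pos hx.1 hx.2

lemma sqrt_int_eq : ∫ t in A..(1:ℝ), Real.sqrt (1-t) = (2/3) * (1-A)^((3:ℝ)/2) := by
  have key : ∀ t ∈ Set.uIcc A 1,
      HasDerivAt (fun t : ℝ => -(2/3) * (1-t)^((3:ℝ)/2)) (Real.sqrt (1-t)) t := by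
    intro t _
    have hb : HasDerivAt (fun t : ℝ => 1 - t) (-1) t := by
      simpa using (hasDerivAt_id t).const_sub 1
    have h := (hb.rpow_const (Or.inr (by norm_num : (1:ℝ) ≤ 3/2))).const_mul (-(2/3) : ℝ)
    refine h.congr_deriv (Eq.symm ?_)
    rw [show (3:ℝ)/2 - 1 = 1/2 by norm_num, ← Real.sqrt_eq_rpow]
    ring
  have hint : IntervalIntegrable (fun t => Real.sqrt (1-t)) MeasureTheory.volume A 1 :=
    (Real.continuous_sqrt.comp (continuous_const.sub continuous_id)).intervalIntegrable A 1
  rw [integral_eq_sub_of_hasDerivAt key hint]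
  rw [show (1:ℝ) - 1 = 0 by ring, Real.zero_rpow (by norm_num : ((3:ℝ)/2) ≠ 0)]
  ring

lemma g0_A_neg : g0 A < 0 := by
  have hA0 := A_pos
  have hA1 := A_lt_one
  have hAgt := A_gt
  -- pointwise bound  f t ≤ √2 * √(1-t) / A  on [A,1]
  have hpt : ∀ t ∈ Set.Icc A 1, f t ≤ Real.sqrt 2 * Real.sqrt (1-t) / A := by
    intro t ht
    have ht0 : 0 < t := hA0.trans_le ht.1
    have h1t : (0:ℝ) ≤ 1 - t := by linarith [ht.2]
    have hAt : A^2 ≤ t^2 := by nlinarith [ht.1]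
    have h1 : 1/t^2 - 1 ≤ 2*(1-t)/A^2 := by
      rw [div_sub' (by positivity), div_le_div_iff₀ (by positivity) (by positivity)]
      nlinarith [mul_nonneg (mul_nonneg h1t h1t) (sq_nonneg t),
        mul_le_mul_of_nonneg_left hAt (mul_nonneg h1t (by linarith [ht.1] : (0:ℝ) ≤ 1 + t))]
    have h2 : 2*(1-t)/A^2 = (Real.sqrt 2 * Real.sqrt (1-t) / A)^2 := by
      rw [div_pow, mul_pow, Real.sq_sqrt (by norm_num : (0:ℝ) ≤ 2), Real.sq_sqrt h1t]
    calc f t ≤ Real.sqrt (2*(1-t)/A^2) := Real.sqrt_le_sqrt h1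
      _ = Real.sqrt 2 * Real.sqrt (1-t) / A := by
          rw [h2, Real.sqrt_sq (by positivity)]
  have hint2 : IntervalIntegrable (fun t => Real.sqrt 2 * Real.sqrt (1-t) / A)
      MeasureTheory.volume A 1 := by
    apply Continuous.intervalIntegrable
    exact (continuous_const.mul (Real.continuous_sqrt.comp
      (continuous_const.sub continuous_id))).div_const A
  have hint1 : (∫ t in A..(1:ℝ), f t) ≤ ∫ t in A..(1:ℝ), Real.sqrt 2 * Real.sqrt (1-t) / A :=
    intervalIntegral.integral_mono_on hA1.le (f_intOn hA0 one_pos) hint2 hpt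
  have hval : (∫ t in A..(1:ℝ), Real.sqrt 2 * Real.sqrt (1-t) / A)
      = (Real.sqrt 2 / A) * ((2/3) * (1-A)^((3:ℝ)/2)) := by
    have : ∀ t : ℝ, Real.sqrt 2 * Real.sqrt (1-t) / A
        = (Real.sqrt 2 / A) * Real.sqrt (1-t) := fun t => by ring
    simp_rw [this]
    rw [intervalIntegral.integral_const_mul, sqrt_int_eq]
  -- the strict numeric inequality
  have hq2 : Real.sqrt 2 ^ 2 = 2 := Real.sq_sqrt (by norm_num)
  have hqpos : (0:ℝ) < Real.sqrt 2 := by nlinarith [sqrt2_bounds.1]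
  set u := Real.sqrt (1 + A) with hu_def
  have hu : (1.32:ℝ) < u := by
    rw [hu_def]
    rw [show (1.32:ℝ) = Real.sqrt (1.32^2) by rw [Real.sqrt_sq]; norm_num]
    apply Real.sqrt_lt_sqrt (by positivity)
    nlinarith
  have h43 : (4:ℝ)/3 < A * ((1+A) * u) := by
    have h1 : (1.76:ℝ)*1.32 < (1+A)*u := by nlinarith
    have := mul_lt_mul'' hAgt h1 (by norm_num) (by norm_num)
    nlinarith [this]
  set P := (1-A)^((3:ℝ)/2) with hP_def
  have hP : 0 < P := Real.rpow_pos_of_pos (by linarith) _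
  have hsplit : (1 - A^2)^((3:ℝ)/2) = P * (1+A)^((3:ℝ)/2) := by
    rw [hP_def, ← Real.mul_rpow (by linarith) (by linarith)]
    ring_nf
  have h32 : (1+A)^((3:ℝ)/2) = (1+A) * u := by
    rw [rpow_threehalf (by linarith), hu_def]
  have hstrict : (Real.sqrt 2 / A) * ((2/3) * P) < (1 - A^2)^((3:ℝ)/2) / (2 - A^2) := by
    rw [hsplit, h32, A_sq, show (2:ℝ) - (2 - Real.sqrt 2) = Real.sqrt 2 by ring,
      div_mul_eq_mul_div, div_lt_div_iff₀ hA0 hqpos]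
    nlinarith [mul_lt_mul_of_pos_left h43 hP]
  have : g0 A = (∫ t in A..(1:ℝ), f t) - (1 - A^2)^((3:ℝ)/2) / (2 - A^2) := rfl
  rw [this]
  linarith [hint1, hval ▸ hint1, hstrict, hval.symm ▸ hint1]

lemma g0_lower {ζ : ℝ} (h0 : 0 < ζ) (hh : ζ < 1/2) :
    (1/2) * (Real.log (1/2) - Real.log ζ) - 1 ≤ g0 ζ := by
  have hsplit : (∫ t in ζ..(1/2:ℝ), f t) + (∫ t in (1/2:ℝ)..1, f t)
      = ∫ t in ζ..(1:ℝ), f t :=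
    intervalIntegral.integral_add_adjacent_intervals (f_intOn h0 (by norm_num))
      (f_intOn (by norm_num) one_pos)
  have h2 : (0:ℝ) ≤ ∫ t in (1/2:ℝ)..1, f t :=
    intervalIntegral.integral_nonneg (by norm_num) (fun x _ => Real.sqrt_nonneg _)
  have hintinv : IntervalIntegrable (fun t : ℝ => (1/2) * t⁻¹) MeasureTheory.volume ζ (1/2) := by
    apply ContinuousOn.intervalIntegrable
    apply ContinuousOn.mul continuousOn_const
    apply ContinuousOn.inv₀ continuousOn_id
    intro x hx
    intro h0x
    simp only [id_eq] at h0x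
    rcases Set.mem_uIcc.1 hx with h | h <;> rw [h0x] at h <;> linarith [h.1, h.2]
  have h3 : (∫ t in ζ..(1/2:ℝ), (1/2) * t⁻¹) ≤ ∫ t in ζ..(1/2:ℝ), f t := by
    apply intervalIntegral.integral_mono_on hh.le hintinv (f_intOn h0 (by norm_num))
    intro t ht
    have ht0 : 0 < t := lt_of_lt_of_le h0 ht.1
    have key : (1/2) * t⁻¹ = Real.sqrt (((1/2) * t⁻¹)^2) := by
      rw [Real.sqrt_sq (by positivity)]
    rw [key]
    apply Real.sqrt_le_sqrt
    rw [mul_pow, inv_pow]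
    rw [show ((1:ℝ)/2)^2 * (t^2)⁻¹ = (1/4) / t^2 by ring]
    rw [div_le_iff₀ (by positivity)]
    have he : (1/t^2 - 1) * t^2 = 1 - t^2 := by field_simp
    rw [he]
    nlinarith [ht.2]
  have h4 : (∫ t in ζ..(1/2:ℝ), (1/2) * t⁻¹) = (1/2) * (Real.log (1/2) - Real.log ζ) := by
    rw [intervalIntegral.integral_const_mul, integral_inv_of_pos h0 (by norm_num),
      Real.log_div (by norm_num) h0.ne']
  have h5 : (1 - ζ^2)^((3:ℝ)/2) / (2 - ζ^2) ≤ 1 := by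
    rw [div_le_one (by nlinarith)]
    have := Real.rpow_le_one (by nlinarith : (0:ℝ) ≤ 1 - ζ^2) (by nlinarith) (by norm_num : (0:ℝ) ≤ 3/2)
    nlinarith
  have : g0 ζ = (∫ t in ζ..(1:ℝ), f t) - (1 - ζ^2)^((3:ℝ)/2) / (2 - ζ^2) := rfl
  rw [this, ← hsplit]
  linarith

lemma tendsto_g0 : Tendsto g0 (nhdsWithin 0 (Set.Ioi (0 : ℝ))) atTop := by
  have h1 := Real.tendsto_log_nhdsGT_zero
  have h2 : Tendsto (fun ζ : ℝ => -Real.log ζ) (nhdsWithin 0 (Set.Ioi 0)) atTop :=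
    tendsto_neg_atBot_atTop.comp h1
  have h3 := h2.const_mul_atTop (by norm_num : (0:ℝ) < 1/2)
  have h4 := tendsto_atTop_add_const_right _ ((1/2) * Real.log (1/2) - 1) h3
  have h5 : Tendsto (fun ζ : ℝ => (1/2) * (Real.log (1/2) - Real.log ζ) - 1)
      (nhdsWithin 0 (Set.Ioi 0)) atTop := by
    refine h4.congr (fun ζ => by ring)
  apply tendsto_atTop_mono' _ _ h5
  filter_upwards [Ioo_mem_nhdsGT_of_mem (by norm_num : (0:ℝ) ∈ Set.Ico 0 (1/2))] with ζ hζ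
  exact g0_lower hζ.1 hζ.2

end Stmt9Aux

theorem stmt9 :
    Tendsto g0 (nhdsWithin 0 (Set.Ioi (0 : ℝ))) atTop
      ∧ g0 (Real.sqrt (2 - Real.sqrt 2)) < 0
      ∧ ∃ ζ₀ ∈ Set.Ioo (0 : ℝ) (Real.sqrt (2 - Real.sqrt 2)),
          g0 ζ₀ = 0
          ∧ (∀ ζ ∈ Set.Ioo (0 : ℝ) (Real.sqrt (2 - Real.sqrt 2)), g0 ζ = 0 → ζ = ζ₀)
          ∧ ∀ ζ ∈ Set.Ioo ζ₀ (1 : ℝ), g0 ζ < 0 := by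
  have hA0 := Stmt9Aux.A_pos
  have hA1 := Stmt9Aux.A_lt_one
  have hgA := Stmt9Aux.g0_A_neg
  have hten := Stmt9Aux.tendsto_g0
  refine ⟨hten, hgA, ?_⟩
  -- find ε ∈ (0, A) with g0 ε > 0
  have hev : ∀ᶠ ζ in nhdsWithin 0 (Set.Ioi (0:ℝ)), 0 < g0 ζ ∧ ζ ∈ Set.Ioo 0 Stmt9Aux.A := by
    filter_upwards [hten.eventually (eventually_gt_atTop 0),
      Ioo_mem_nhdsGT_of_mem (Set.left_mem_Ico.2 hA0)] with ζ h1 h2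
    exact ⟨h1, h2⟩
  obtain ⟨ε, hgε, hε⟩ := hev.exists
  -- IVT on [ε, A]
  have hcont : ContinuousOn g0 (Set.Icc ε Stmt9Aux.A) :=
    Stmt9Aux.contOn_g0.mono (fun x hx => ⟨lt_of_lt_of_le hε.1 hx.1, hx.2.trans hA1.le⟩)
  have h0mem : (0:ℝ) ∈ Set.Icc (g0 Stmt9Aux.A) (g0 ε) := ⟨hgA.le, hgε.le⟩
  obtain ⟨ζ₀, hζ₀mem, hζ₀⟩ := intermediate_value_Icc' hε.2.le hcont h0mem
  have hζ₀A : ζ₀ < Stmt9Aux.A := by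
    rcases lt_or_eq_of_le hζ₀mem.2 with h | h
    · exact h
    · exfalso; rw [h] at hζ₀; rw [hζ₀] at hgA; exact lt_irrefl 0 hgA
  have hζ₀0 : 0 < ζ₀ := lt_of_lt_of_le hε.1 hζ₀mem.1
  refine ⟨ζ₀, ⟨hζ₀0, hζ₀A⟩, hζ₀, ?_, ?_⟩
  · -- uniqueness
    intro ζ hζ hg
    exact Stmt9Aux.strictAntiOn_g0.injOn ⟨hζ.1, hζ.2.le⟩ ⟨hζ₀0, hζ₀A.le⟩ (hg.trans hζ₀.symm)
  · -- negativity on (ζ₀, 1)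
    intro ζ hζ
    rcases le_or_gt ζ Stmt9Aux.A with h | h
    · have := Stmt9Aux.strictAntiOn_g0 ⟨hζ₀0, hζ₀A.le⟩ ⟨hζ₀0.trans hζ.1, h⟩ hζ.1
      rw [hζ₀] at this
      exact this
    · have := Stmt9Aux.strictMonoOn_g0 ⟨h.le, hζ.2.le⟩ ⟨hA1.le, le_refl 1⟩ hζ.2
      rw [Stmt9Aux.g0_one] at this
      exact this
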